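/- Let n ≥ 1, p ∈ (0,1), q := 1-p, and B_n ~ binomial(n, p), with q_j := P(B_n ≥ j). Let Q_n^Lin be the linear interpolation over ℤ of j ↦ q_j, and Q_n^LC(x) := q_j^{1-(x-j)} q_{j+1}^{x-j} for j ≤ x ≤ j+1 (the least log-concave majorant of the tail restricted to ℤ, extended by geometric interpolation). Let u* ∈ (0,1) be the unique root of ln((1-u)/(-ln u)) - 1 - (1/2)(1+u)(ln u)/(1-u) = 0, u** := u*/(1 - u*), and j** := ⌊(n - u** q/p)/(1 + u** q/p)⌋. Then Q_n^Lin(x + 1/2) ≤ Q_n^LC(x) for all real x ≤ j** + 1. -/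

import Mathlib

lemma tangent_line (u : ℝ) (hu : u ∈ Set.Ioo (0:ℝ) 1)
    (hroot : Real.log ((1 - u) / (-Real.log u)) - 1
      - (1 / 2) * ((1 + u) * Real.log u) / (1 - u) = 0) :
    ∀ t : ℝ, (1 + u) / 2 - t * (1 - u) ≤ u ^ t := by
  obtain ⟨hu0, hu1⟩ := hu
  intro t
  obtain ⟨L, hL⟩ : ∃ L, L = Real.log u := ⟨_, rfl⟩
  have hLneg : L < 0 := hL ▸ Real.log_neg hu0 hu1
  have hLne : L ≠ 0 := ne_of_lt hLneg
  have hne : (1 : ℝ) - u ≠ 0 := by linarith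
  obtain ⟨A, hA⟩ : ∃ A, A = (1 - u) / (-L) := ⟨_, rfl⟩
  have hroot' : Real.log A - 1 - (1 / 2) * ((1 + u) * L) / (1 - u) = 0 := by
    rw [hA, hL]; rw [← hL] at hroot ⊢; exact hroot
  have hApos : 0 < A := hA ▸ div_pos (by linarith) (by linarith)
  obtain ⟨t0, ht0⟩ : ∃ t0, t0 = Real.log A / L := ⟨_, rfl⟩
  have hexp0 : Real.exp (t0 * L) = A := by
    rw [ht0, div_mul_cancel₀ _ hLne, Real.exp_log hApos]
  have hrpow : u ^ t = Real.exp (t * L) := by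
    rw [Real.rpow_def_of_pos hu0, hL]; ring_nf
  have hbound : A * (1 + (t - t0) * L) ≤ u ^ t := by
    rw [hrpow]
    have e : Real.exp (t * L) = A * Real.exp ((t - t0) * L) := by
      rw [← hexp0, ← Real.exp_add]; ring_nf
    rw [e]
    have := Real.add_one_le_exp ((t - t0) * L)
    nlinarith [Real.exp_pos ((t - t0) * L)]
  have hAnL : A * (-L) = 1 - u := by rw [hA]; exact div_mul_cancel₀ _ (neg_ne_zero.mpr hLne)
  have hAL : A * L = -(1 - u) := by nlinarith [hAnL]
  have hlogA : Real.log A = 1 + (1 / 2) * ((1 + u) * L) / (1 - u) := by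
    linarith [hroot']
  have ht0L : t0 * L = Real.log A := by rw [ht0]; exact div_mul_cancel₀ _ hLne
  have h2 : A * ((1 / 2) * ((1 + u) * L) / (1 - u)) = -((1 + u) / 2) := by
    rw [mul_div_assoc']
    rw [div_eq_iff hne]
    linear_combination ((1 + u) / 2) * hAL
  have key : A * (1 + (t - t0) * L) = (1 + u) / 2 - t * (1 - u) := by
    have e1 : A * (1 + (t - t0) * L) = A + (A * L) * t - A * (t0 * L) := by ring
    have e2 : A * (t0 * L) = A + A * ((1 / 2) * ((1 + u) * L) / (1 - u)) := by
      rw [ht0L, hlogA]; ring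
    rw [e1, e2, h2, hAL]; ring
  linarith [hbound]

lemma key_ineq (u : ℝ) (hu0 : 0 < u) (hu1 : u < 1)
    (htang : ∀ t : ℝ, (1 + u) / 2 - t * (1 - u) ≤ u ^ t)
    (r : ℝ) (hr1 : u ≤ r) (hr2 : r ≤ 1)
    (t : ℝ) (ht0 : 0 ≤ t) (ht1 : t ≤ 1) :
    (1 / 2 - t) + (1 / 2 + t) * r ≤ r ^ t := by
  have hne : (0:ℝ) < 1 - u := by linarith
  obtain ⟨a, ha⟩ : ∃ a, a = (1 - r) / (1 - u) := ⟨_, rfl⟩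
  obtain ⟨b, hb⟩ : ∃ b, b = (r - u) / (1 - u) := ⟨_, rfl⟩
  have ha0 : 0 ≤ a := ha ▸ div_nonneg (by linarith) (by linarith)
  have hb0 : 0 ≤ b := hb ▸ div_nonneg (by linarith) (by linarith)
  have hab : a + b = 1 := by
    rw [ha, hb, ← add_div, div_eq_one_iff_eq (ne_of_gt hne)]; ring
  have hr : a * u + b * 1 = r := by
    rw [ha, hb]; field_simp; ring
  have hconc := (Real.concaveOn_rpow ht0 ht1).2 (Set.mem_Ici.mpr hu0.le)
    (Set.mem_Ici.mpr (by norm_num : (0:ℝ) ≤ 1)) ha0 hb0 hab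
  simp only [smul_eq_mul] at hconc
  rw [hr, Real.one_rpow] at hconc
  -- hconc : a * u ^ t + b * 1 ≤ r ^ t
  have htu := htang t
  -- (1/2 - t) + (1/2+t)*r = a*((1+u)/2 - t*(1-u)) + b*1
  have hlin : (1 / 2 - t) + (1 / 2 + t) * r = a * ((1 + u) / 2 - t * (1 - u)) + b * 1 := by
    have : r = a * u + b := by linarith [hr]
    rw [this]
    have h1u : a * (1 - u) = 1 - (a * u + b) := by
      have := hab; nlinarith
    nlinarith [h1u]
  rw [hlin]
  have : a * ((1 + u) / 2 - t * (1 - u)) ≤ a * u ^ t :=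
    mul_le_mul_of_nonneg_left htu ha0
  linarith



section
variable (n : ℕ) (p q : ℝ)

lemma qt_nonneg (hp0 : 0 < p) (hq0 : 0 < q) (Qt : ℤ → ℝ)
    (hQt : ∀ j : ℤ, Qt j = if j < 0 then 1 else
      ∑ k ∈ Finset.Icc j.toNat n, (n.choose k : ℝ) * p ^ k * q ^ (n - k)) :
    ∀ j : ℤ, 0 ≤ Qt j := by
  intro j
  rw [hQt]
  split
  · norm_num
  · exact Finset.sum_nonneg fun k _ => by positivity

lemma qt_one (hq : q = 1 - p) (Qt : ℤ → ℝ)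
    (hQt : ∀ j : ℤ, Qt j = if j < 0 then 1 else
      ∑ k ∈ Finset.Icc j.toNat n, (n.choose k : ℝ) * p ^ k * q ^ (n - k)) :
    ∀ j : ℤ, j ≤ 0 → Qt j = 1 := by
  intro j hj
  rw [hQt]
  rcases lt_or_eq_of_le hj with h | h
  · simp [h]
  · subst h
    simp only [lt_self_iff_false, if_false, Int.toNat_zero]
    have hrange : Finset.Icc 0 n = Finset.range (n + 1) := by
      ext k; simp [Nat.lt_succ_iff]
    rw [hrange]
    have hap := add_pow p q n
    have hpq : p + q = 1 := by rw [hq]; ring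
    rw [hpq, one_pow] at hap
    rw [hap]
    exact Finset.sum_congr rfl fun k _ => by ring

lemma qt_mono (hp0 : 0 < p) (hq0 : 0 < q) (hq : q = 1 - p) (Qt : ℤ → ℝ)
    (hQt : ∀ j : ℤ, Qt j = if j < 0 then 1 else
      ∑ k ∈ Finset.Icc j.toNat n, (n.choose k : ℝ) * p ^ k * q ^ (n - k)) :
    ∀ j : ℤ, Qt (j + 1) ≤ Qt j := by
  intro j
  rcases le_or_gt (j + 1) 0 with h | h
  · rw [qt_one n p q hq Qt hQt (j+1) h, qt_one n p q hq Qt hQt j (by omega)]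
  · have hj1 : ¬ (j + 1 < 0) := by omega
    rcases lt_or_ge j 0 with hj | hj
    · rw [qt_one n p q hq Qt hQt j (by omega)]
      have hj0 : j = -1 := by omega
      have h0 : Qt (j + 1) = Qt 0 := by rw [hj0]; norm_num
      rw [h0, ← qt_one n p q hq Qt hQt 0 le_rfl]
    · rw [hQt, hQt]
      simp only [hj1, if_false, Int.not_lt.mpr hj, if_false]
      apply Finset.sum_le_sum_of_subset_of_nonneg
      · apply Finset.Icc_subset_Icc_left
        omega
      · intro k _ _; positivity

lemma qt_le_one (hp0 : 0 < p) (hq0 : 0 < q) (hq : q = 1 - p) (Qt : ℤ → ℝ)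
    (hQt : ∀ j : ℤ, Qt j = if j < 0 then 1 else
      ∑ k ∈ Finset.Icc j.toNat n, (n.choose k : ℝ) * p ^ k * q ^ (n - k)) :
    ∀ j : ℤ, Qt j ≤ 1 := by
  intro j
  rcases le_or_gt j 0 with h | h
  · rw [qt_one n p q hq Qt hQt j h]
  · have h1 : Qt j ≤ Qt 0 := by
      rw [hQt, hQt]
      simp only [lt_irrefl, if_false, Int.not_lt.mpr h.le, if_false, Int.toNat_zero]
      apply Finset.sum_le_sum_of_subset_of_nonneg
      · apply Finset.Icc_subset_Icc_left; omega
      · intro k _ _; positivity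
    rw [qt_one n p q hq Qt hQt 0 le_rfl] at h1
    exact h1

lemma qt_ratio (hp0 : 0 < p) (hq0 : 0 < q)
    (Qt : ℤ → ℝ)
    (hQt : ∀ j : ℤ, Qt j = if j < 0 then 1 else
      ∑ k ∈ Finset.Icc j.toNat n, (n.choose k : ℝ) * p ^ k * q ^ (n - k))
    (ustar ustar2 : ℝ) (hus0 : 0 < ustar) (hus1 : ustar < 1)
    (hu2 : ustar2 = ustar / (1 - ustar))
    (j : ℤ) (hj0 : 0 ≤ j) (hjn : j + 1 ≤ (n : ℤ))
    (hcond : ustar2 * ((j : ℝ) + 1) * q ≤ ((n : ℝ) - (j : ℝ)) * p) :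
    0 < Qt j ∧ ustar * Qt j ≤ Qt (j + 1) := by
  obtain ⟨m, rfl⟩ : ∃ m : ℕ, j = (m : ℤ) := ⟨j.toNat, (Int.toNat_of_nonneg hj0).symm⟩
  have hmn : m + 1 ≤ n := by exact_mod_cast hjn
  set b : ℕ → ℝ := fun k => (n.choose k : ℝ) * p ^ k * q ^ (n - k) with hb
  have hbmpos : 0 < b m := by
    have h1 : 0 < (n.choose m : ℝ) := by exact_mod_cast Nat.choose_pos (by omega : m ≤ n)
    have h2 : 0 < p ^ m := by positivity
    have h3 : 0 < q ^ (n - m) := by positivity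
    rw [hb]; positivity
  have hbnn : ∀ k, 0 ≤ b k := fun k => by rw [hb]; positivity
  have hQm : Qt m = ∑ k ∈ Finset.Icc m n, b k := by
    rw [hQt, if_neg (by omega)]; simp [hb]
  have hQm1 : Qt ((m : ℤ) + 1) = ∑ k ∈ Finset.Icc (m+1) n, b k := by
    rw [hQt]
    have h1 : ((m : ℤ) + 1) = ((m + 1 : ℕ) : ℤ) := by push_cast; ring
    rw [h1, if_neg (by omega)]
    simp [hb]
  have hsplit : Qt m = b m + Qt ((m : ℤ) + 1) := by
    rw [hQm, hQm1, Finset.Icc_eq_cons_Ioc (by omega : m ≤ n), Finset.sum_cons,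
      ← Finset.Icc_add_one_left_eq_Ioc]
  have hsingle : b (m + 1) ≤ Qt ((m : ℤ) + 1) := by
    rw [hQm1]
    exact Finset.single_le_sum (fun k _ => hbnn k) (Finset.mem_Icc.mpr ⟨le_rfl, hmn⟩)
  -- key binomial identity
  have hcc : (n.choose (m+1) : ℝ) * ((m : ℝ) + 1) = (n.choose m : ℝ) * ((n - m : ℕ) : ℝ) := by
    exact_mod_cast congrArg (Nat.cast : ℕ → ℝ) (Nat.choose_succ_right_eq n m)
  have hqq : q ^ (n - (m+1)) * q = q ^ (n - m) := by
    rw [← pow_succ]; congr 1; omega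
  have hbb : b (m+1) * (((m : ℝ) + 1) * q) = b m * (((n - m : ℕ) : ℝ) * p) := by
    rw [hb]
    simp only []
    calc (n.choose (m+1) : ℝ) * p ^ (m+1) * q ^ (n-(m+1)) * (((m : ℝ) + 1) * q)
        = ((n.choose (m+1) : ℝ) * ((m : ℝ) + 1)) * p ^ (m+1) * (q ^ (n-(m+1)) * q) := by ring
      _ = ((n.choose m : ℝ) * ((n - m : ℕ) : ℝ)) * (p ^ m * p) * q ^ (n - m) := by
          rw [hcc, hqq, pow_succ]
      _ = (n.choose m : ℝ) * p ^ m * q ^ (n-m) * (((n - m : ℕ) : ℝ) * p) := by ring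
  have hcast : ((n - m : ℕ) : ℝ) = (n : ℝ) - (m : ℝ) := by
    rw [Nat.cast_sub (by omega : m ≤ n)]
  have hcond' : ustar2 * ((m : ℝ) + 1) * q ≤ ((n : ℝ) - (m : ℝ)) * p := by
    convert hcond using 2 <;> push_cast <;> ring
  have hMpos : 0 < ((m : ℝ) + 1) * q := by positivity
  have hb1 : ustar2 * b m ≤ b (m + 1) := by
    have h1 : b m * (ustar2 * ((m : ℝ) + 1) * q) ≤ b m * (((n : ℝ) - (m : ℝ)) * p) :=
      mul_le_mul_of_nonneg_left hcond' (hbnn m)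
    rw [← hcast, ← hbb] at h1
    have h2 : (ustar2 * b m) * (((m : ℝ) + 1) * q) ≤ b (m+1) * (((m : ℝ) + 1) * q) := by
      nlinarith [h1]
    exact (mul_le_mul_iff_of_pos_right hMpos).mp h2
  have hQ1 : ustar2 * b m ≤ Qt ((m : ℤ) + 1) := le_trans hb1 hsingle
  have hQ1nn : 0 ≤ Qt ((m : ℤ) + 1) := qt_nonneg n p q hp0 hq0 Qt hQt _
  constructor
  · rw [hsplit]; linarith
  · have hus2 : ustar2 * (1 - ustar) = ustar := by
      rw [hu2, div_mul_cancel₀ _ (by linarith : (1:ℝ) - ustar ≠ 0)]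
    rw [hsplit]
    nlinarith [hQ1, hus2, hbmpos, hQ1nn]


set_option maxHeartbeats 1000000 in
theorem stmt_17 (n : ℕ) (hn : 1 ≤ n) (p : ℝ) (hp : p ∈ Set.Ioo (0 : ℝ) 1)
    (q : ℝ) (hq : q = 1 - p)
    (Qt : ℤ → ℝ)
    (hQt : ∀ j : ℤ, Qt j = if j < 0 then 1 else
      ∑ k ∈ Finset.Icc j.toNat n, (n.choose k : ℝ) * p ^ k * q ^ (n - k))
    (QLin QLC : ℝ → ℝ)
    (hQLin : ∀ x : ℝ, QLin x = (1 - (x - ⌊x⌋)) * Qt ⌊x⌋ + (x - ⌊x⌋) * Qt (⌊x⌋ + 1))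
    (hQLC : ∀ x : ℝ, QLC x = Qt ⌊x⌋ ^ (1 - (x - ⌊x⌋)) * Qt (⌊x⌋ + 1) ^ (x - ⌊x⌋))
    (ustar : ℝ) (hu : ustar ∈ Set.Ioo (0 : ℝ) 1)
    (hroot : Real.log ((1 - ustar) / (-Real.log ustar)) - 1
      - (1 / 2) * ((1 + ustar) * Real.log ustar) / (1 - ustar) = 0)
    (huniq : ∀ u ∈ Set.Ioo (0 : ℝ) 1,
      Real.log ((1 - u) / (-Real.log u)) - 1
        - (1 / 2) * ((1 + u) * Real.log u) / (1 - u) = 0 → u = ustar)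
    (ustar2 : ℝ) (hu2 : ustar2 = ustar / (1 - ustar))
    (jstar2 : ℤ) (hj2 : jstar2 = ⌊((n : ℝ) - ustar2 * q / p) / (1 + ustar2 * q / p)⌋) :
    ∀ x : ℝ, x ≤ (jstar2 : ℝ) + 1 → QLin (x + 1 / 2) ≤ QLC x := by
  obtain ⟨hp0, hp1⟩ := hp
  obtain ⟨hus0, hus1⟩ := hu
  have hq0 : 0 < q := by rw [hq]; linarith
  have hu20 : 0 < ustar2 := by rw [hu2]; exact div_pos hus0 (by linarith)
  have htang := tangent_line ustar ⟨hus0, hus1⟩ hroot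
  have hmono := qt_mono n p q hp0 hq0 hq Qt hQt
  have hnn := qt_nonneg n p q hp0 hq0 Qt hQt
  have hone := qt_one n p q hq Qt hQt
  intro x hx
  obtain ⟨j, hj⟩ : ∃ j : ℤ, j = ⌊x⌋ := ⟨_, rfl⟩
  obtain ⟨t, ht⟩ : ∃ t : ℝ, t = x - (j : ℝ) := ⟨_, rfl⟩
  have ht0 : 0 ≤ t := by rw [ht, hj]; linarith [Int.floor_le x]
  have ht1 : t < 1 := by rw [ht, hj]; linarith [Int.lt_floor_add_one x]
  have hxj : x = (j : ℝ) + t := by rw [ht]; ring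
  have hQLCx : QLC x = Qt j ^ (1 - t) * Qt (j + 1) ^ t := by
    rw [hQLC, ← hj, ← ht]
  rcases lt_or_ge t (1/2) with hcase | hcase
  · -- t < 1/2 : floor (x + 1/2) = j
    have hfloor : ⌊x + 1/2⌋ = j := by
      rw [Int.floor_eq_iff]
      constructor
      · linarith [hxj]
      · push_cast; linarith [hxj]
    have hQLinx : QLin (x + 1/2) = (1/2 - t) * Qt j + (1/2 + t) * Qt (j + 1) := by
      rw [hQLin, hfloor]
      have h1 : x + 1/2 - (j : ℝ) = 1/2 + t := by rw [hxj]; ring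
      rw [h1]
      ring
    rcases eq_or_lt_of_le ht0 with ht0' | ht0'
    · -- t = 0
      have hRHS : QLC x = Qt j := by
        rw [hQLCx, ← ht0']
        norm_num
      rw [hQLinx, hRHS, ← ht0']
      have := hmono j
      linarith [hnn (j+1)]
    · -- 0 < t, hence j ≤ jstar2
      have hjle : j ≤ jstar2 := by
        have h1 : (j : ℝ) < (jstar2 : ℝ) + 1 := by linarith [hxj]
        have h2 : j < jstar2 + 1 := by exact_mod_cast h1
        omega
      rcases lt_or_ge j 0 with hjneg | hjpos
      · -- j < 0 : everything is 1
        rw [hQLinx, hQLCx, hone j (by omega), hone (j+1) (by omega), Real.one_rpow,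
          Real.one_rpow]
        linarith
      · -- main case
        obtain ⟨c, hc⟩ : ∃ c : ℝ, c = ustar2 * q / p := ⟨_, rfl⟩
        have hc0 : 0 < c := by rw [hc]; positivity
        have hcp : c * p = ustar2 * q := by
          rw [hc]; exact div_mul_cancel₀ _ (ne_of_gt hp0)
        have hfl : (jstar2 : ℝ) ≤ ((n : ℝ) - c) / (1 + c) := by
          rw [hj2, hc]; exact Int.floor_le _
        -- jstar2 < n
        have hjn : j + 1 ≤ (n : ℤ) := by
          have h1 : ((n : ℝ) - c) / (1 + c) < n := by
            rw [div_lt_iff₀ (by linarith)]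
            have hn0 : (0 : ℝ) ≤ (n : ℝ) := Nat.cast_nonneg n
            nlinarith
          have h2 : (jstar2 : ℝ) < (n : ℝ) := lt_of_le_of_lt hfl h1
          have h3 : jstar2 < (n : ℤ) := by exact_mod_cast h2
          omega
        have hcond : ustar2 * ((j : ℝ) + 1) * q ≤ ((n : ℝ) - (j : ℝ)) * p := by
          have hjr : (j : ℝ) ≤ ((n : ℝ) - c) / (1 + c) := by
            calc (j : ℝ) ≤ (jstar2 : ℝ) := by exact_mod_cast hjle
              _ ≤ _ := hfl
          have h1 : (j : ℝ) * (1 + c) ≤ (n : ℝ) - c := by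
            rw [← le_div_iff₀ (by linarith : (0:ℝ) < 1 + c)]
            exact hjr
          have h2 : ((j : ℝ) * (1 + c)) * p ≤ ((n : ℝ) - c) * p :=
            mul_le_mul_of_nonneg_right h1 hp0.le
          have h3 : (j : ℝ) * (c * p) = (j : ℝ) * (ustar2 * q) := by rw [hcp]
          nlinarith [h2, hcp, h3]
        obtain ⟨hQj, hQr⟩ := qt_ratio n p q hp0 hq0 Qt hQt ustar ustar2 hus0 hus1 hu2
          j hjpos hjn hcond
        obtain ⟨r, hr⟩ : ∃ r : ℝ, r = Qt (j+1) / Qt j := ⟨_, rfl⟩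
        have hrQ : r * Qt j = Qt (j+1) := by
          rw [hr]; exact div_mul_cancel₀ _ (ne_of_gt hQj)
        have hr0 : 0 ≤ r := by rw [hr]; exact div_nonneg (hnn _) hQj.le
        have hr1 : ustar ≤ r := by
          rw [hr, le_div_iff₀ hQj]
          linarith [hQr]
        have hr2 : r ≤ 1 := by
          rw [hr, div_le_one hQj]
          exact hmono j
        have hkey := key_ineq ustar hus0 hus1 htang r hr1 hr2 t ht0 (by linarith)
        have hRHS : Qt j ^ (1 - t) * Qt (j + 1) ^ t = Qt j * r ^ t := by
          rw [← hrQ]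
          calc Qt j ^ (1-t) * (r * Qt j) ^ t
              = Qt j ^ (1-t) * (r ^ t * Qt j ^ t) := by rw [Real.mul_rpow hr0 hQj.le]
            _ = (Qt j ^ (1-t) * Qt j ^ t) * r ^ t := by ring
            _ = Qt j ^ ((1-t)+t) * r ^ t := by rw [Real.rpow_add hQj]
            _ = Qt j * r ^ t := by norm_num
        have hLHS : (1/2 - t) * Qt j + (1/2 + t) * Qt (j + 1)
            = Qt j * ((1/2 - t) + (1/2 + t) * r) := by
          rw [← hrQ]; ring
        rw [hQLinx, hQLCx, hRHS, hLHS]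
        exact mul_le_mul_of_nonneg_left hkey hQj.le
  · -- 1/2 ≤ t : floor (x + 1/2) = j + 1
    have hfloor : ⌊x + 1/2⌋ = j + 1 := by
      rw [Int.floor_eq_iff]
      constructor
      · push_cast; linarith [hxj]
      · push_cast; linarith [hxj]
    have hQLinx : QLin (x + 1/2) = (3/2 - t) * Qt (j+1) + (t - 1/2) * Qt (j + 2) := by
      rw [hQLin, hfloor]
      have h1 : x + 1/2 - ((j : ℤ) + 1 : ℤ) = t - 1/2 := by push_cast; rw [hxj]; ring
      rw [h1]
      have h2 : (j : ℤ) + 1 + 1 = j + 2 := by ring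
      rw [h2]
      ring
    have hLHS : QLin (x + 1/2) ≤ Qt (j+1) := by
      rw [hQLinx]
      have hm2 : Qt (j+2) ≤ Qt (j+1) := by
        have := hmono (j+1); rwa [show j+1+1 = j+2 from by ring] at this
      nlinarith [mul_nonneg (by linarith : (0:ℝ) ≤ t - 1/2)
        (by linarith : (0:ℝ) ≤ Qt (j+1) - Qt (j+2))]
    rcases eq_or_lt_of_le (hnn (j+1)) with hz | hz
    · -- Qt (j+1) = 0
      have hRHS : QLC x = 0 := by
        rw [hQLCx, ← hz, Real.zero_rpow (by linarith : t ≠ 0), mul_zero]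
      rw [hRHS]
      rw [← hz] at hLHS
      exact hLHS
    · have h1 : Qt (j+1) ^ (1-t) ≤ Qt j ^ (1-t) :=
        Real.rpow_le_rpow (hnn _) (hmono j) (by linarith)
      have h2 : Qt (j+1) ^ (1-t) * Qt (j+1) ^ t ≤ Qt j ^ (1-t) * Qt (j+1) ^ t :=
        mul_le_mul_of_nonneg_right h1 (Real.rpow_nonneg (hnn _) t)
      have h3 : Qt (j+1) ^ (1-t) * Qt (j+1) ^ t = Qt (j+1) := by
        rw [← Real.rpow_add hz]; norm_num
      rw [hQLCx]
      rw [h3] at h2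
      linarith [hLHS]
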